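/- Let f ∈ ℚ[x] be monic and decomposable, written as f = g ∘ h with g, h ∈ ℂ[x] both monic, deg g ≥ 2, deg h ≥ 2, and h(0) = 0. Then g and h have rational coefficients: g, h ∈ ℚ[x]. -/

import Mathlib

open Polynomial

private lemma coeff_sum_C_mul_X_pow (s : Finset ℕ) (c : ℕ → ℚ) (t : ℕ) :
    (∑ i ∈ s, C (c i) * X ^ i).coeff t = if t ∈ s then c t else 0 := by
  rw [finset_sum_coeff]
  simp only [coeff_C_mul, coeff_X_pow, mul_ite, mul_one, mul_zero]
  exact Finset.sum_ite_eq s t c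

theorem rational_coeffs_of_monic_decomposition (f : ℚ[X]) (hf : f.Monic)
    (g h : Polynomial ℂ) (hg : g.Monic) (hh : h.Monic)
    (hdg : 2 ≤ g.natDegree) (hdh : 2 ≤ h.natDegree) (hh0 : h.eval 0 = 0)
    (hcomp : f.map (algebraMap ℚ ℂ) = g.comp h) :
    (∃ g' : ℚ[X], g = g'.map (algebraMap ℚ ℂ)) ∧
    (∃ h' : ℚ[X], h = h'.map (algebraMap ℚ ℂ)) := by
  set φ := algebraMap ℚ ℂ with hφ
  set n := h.natDegree with hn
  set m := g.natDegree with hm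
  have hn0 : 0 < n := by omega
  have hmC : (m : ℂ) ≠ 0 := by
    have : m ≠ 0 := by omega
    exact Nat.cast_ne_zero.mpr this
  -- Step 1: all coefficients of h are in the range of φ
  have hstep : ∀ k : ℕ, ∀ j : ℕ, n - j ≤ k → h.coeff j ∈ Set.range φ := by
    intro k
    induction k with
    | zero =>
      intro j hj
      rcases eq_or_lt_of_le (by omega : n ≤ j) with hj' | hj'
      · exact ⟨1, by rw [map_one, ← hj', hh.coeff_natDegree]⟩
      · exact ⟨0, by rw [map_zero, coeff_eq_zero_of_natDegree_lt hj']⟩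
    | succ k ih =>
      intro j hj
      by_cases hjk : n - j ≤ k
      · exact ih j hjk
      rcases Nat.eq_zero_or_pos j with rfl | hj1
      · exact ⟨0, by rw [map_zero, coeff_zero_eq_eval_zero, hh0]⟩
      have hjn : j < n := by omega
      have ih' : ∀ i : ℕ, j < i → h.coeff i ∈ Set.range φ := by
        intro i hi
        exact ih i (by omega)
      -- choose rational values for the higher coefficients
      have hc : ∀ i : ℕ, ∃ q : ℚ, j < i → φ q = h.coeff i := by
        intro i
        by_cases hij : j < i
        · obtain ⟨q, hq⟩ := ih' i hij
          exact ⟨q, fun _ => hq⟩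
        · exact ⟨0, fun hi => absurd hi hij⟩
      choose c hcspec using hc
      set p' : ℚ[X] := ∑ i ∈ Finset.Ioc j n, C (c i) * X ^ i with hp'
      set p : ℂ[X] := p'.map φ with hp
      have hpcoeff : ∀ t : ℕ, p.coeff t = if t ∈ Finset.Ioc j n then h.coeff t else 0 := by
        intro t
        rw [hp, coeff_map, hp', coeff_sum_C_mul_X_pow]
        split_ifs with ht
        · exact hcspec t (Finset.mem_Ioc.mp ht).1
        · exact map_zero φ
      have hphigh : ∀ i : ℕ, j < i → p.coeff i = h.coeff i := by
        intro i hi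
        rw [hpcoeff]
        split_ifs with hi'
        · rfl
        · rw [coeff_eq_zero_of_natDegree_lt]
          simp only [Finset.mem_Ioc, not_and, not_le] at hi'
          exact hi' hi
      have hpdeg : p.natDegree ≤ n := by
        rw [natDegree_le_iff_coeff_eq_zero]
        intro N hN
        rw [hphigh N (by omega), coeff_eq_zero_of_natDegree_lt hN]
      have hpn : p.coeff n = 1 := by rw [hphigh n hjn, hn]; exact hh.coeff_natDegree
      have hpmonic : p.Monic := monic_of_natDegree_le_of_coeff_eq_one n hpdeg hpn
      have hpdeg' : p.natDegree = n :=
        le_antisymm hpdeg (le_natDegree_of_ne_zero (by rw [hpn]; exact one_ne_zero))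
      set r : ℂ[X] := h - p with hr
      have hrhigh : ∀ i : ℕ, j < i → r.coeff i = 0 := by
        intro i hi
        rw [hr, coeff_sub, hphigh i hi, sub_self]
      have hrdeg : r.natDegree ≤ j :=
        natDegree_le_iff_coeff_eq_zero.mpr fun N hN => hrhigh N hN
      have hrj : r.coeff j = h.coeff j := by
        rw [hr, coeff_sub, hpcoeff]
        simp
      -- the geometric sum
      set S : ℂ[X] := ∑ i ∈ Finset.range m, h ^ i * p ^ (m - 1 - i) with hS
      have hgeom : h ^ m = p ^ m + S * r := by
        rw [hr, geom_sum₂_mul]; ring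
      have hSdeg : S.natDegree ≤ (m - 1) * n := by
        apply natDegree_sum_le_of_forall_le
        intro i hi
        rw [Finset.mem_range] at hi
        calc (h ^ i * p ^ (m - 1 - i)).natDegree
            ≤ (h ^ i).natDegree + (p ^ (m - 1 - i)).natDegree := natDegree_mul_le
          _ = i * n + (m - 1 - i) * n := by
              rw [hh.natDegree_pow, hpmonic.natDegree_pow, hpdeg']
          _ ≤ (m - 1) * n := by
              rw [← add_mul]
              exact Nat.mul_le_mul_right n (by omega)
      have hScoeff : S.coeff ((m - 1) * n) = (m : ℂ) := by
        rw [hS, finset_sum_coeff]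
        have : ∀ i ∈ Finset.range m, (h ^ i * p ^ (m - 1 - i)).coeff ((m - 1) * n) = 1 := by
          intro i hi
          rw [Finset.mem_range] at hi
          have hmon : (h ^ i * p ^ (m - 1 - i)).Monic := (hh.pow i).mul (hpmonic.pow _)
          have hdeg : (h ^ i * p ^ (m - 1 - i)).natDegree = (m - 1) * n := by
            rw [(hh.pow i).natDegree_mul (hpmonic.pow _), hh.natDegree_pow,
              hpmonic.natDegree_pow, hpdeg', ← add_mul]
            congr 1
            omega
          rw [← hdeg]
          exact hmon.coeff_natDegree
        rw [Finset.sum_congr rfl this]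
        simp
      set N := (m - 1) * n + j with hN
      have hSr : (S * r).coeff N = (m : ℂ) * r.coeff j := by
        rw [hN, coeff_mul_add_eq_of_natDegree_le hSdeg hrdeg, hScoeff]
      -- the lower part of g
      set g₀ : ℂ[X] := g - X ^ m with hg₀
      have hg₀deg : g₀.natDegree ≤ m - 1 := by
        rw [natDegree_le_iff_coeff_eq_zero]
        intro t ht
        rcases eq_or_lt_of_le (by omega : m ≤ t) with ht' | ht'
        · rw [hg₀, coeff_sub, ← ht', hm, hg.coeff_natDegree, coeff_X_pow,
            if_pos hm.symm, sub_self]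
        · rw [hg₀, coeff_sub, coeff_eq_zero_of_natDegree_lt ht', coeff_X_pow,
            if_neg (by omega), sub_self]
      have hcompN : (g.comp h).coeff N = (g₀.comp h).coeff N + (h ^ m).coeff N := by
        have : g.comp h = g₀.comp h + (X ^ m : ℂ[X]).comp h := by
          rw [← add_comp, hg₀, sub_add_cancel]
        rw [this, coeff_add, X_pow_comp]
      have hg₀N : (g₀.comp h).coeff N = 0 := by
        apply coeff_eq_zero_of_natDegree_lt
        calc (g₀.comp h).natDegree ≤ g₀.natDegree * n := natDegree_comp_le
          _ ≤ (m - 1) * n := Nat.mul_le_mul_right n hg₀deg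
          _ < N := by omega
      -- put it together
      have hkey : φ (f.coeff N) = φ ((p' ^ m).coeff N) + (m : ℂ) * h.coeff j := by
        have h1 : (f.map φ).coeff N = (g.comp h).coeff N := by rw [hcomp]
        rw [coeff_map] at h1
        have hpm : (p ^ m).coeff N = φ ((p' ^ m).coeff N) := by
          rw [hp, ← Polynomial.map_pow, coeff_map]
        rw [h1, hcompN, hg₀N, zero_add, hgeom, coeff_add, hSr, hrj, hpm]
      refine ⟨(f.coeff N - (p' ^ m).coeff N) / (m : ℚ), ?_⟩
      simp only [hφ, eq_ratCast] at hkey ⊢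
      push_cast
      field_simp
      linear_combination hkey
  have hlift : ∀ j : ℕ, h.coeff j ∈ Set.range φ := fun j => hstep (n - j) j le_rfl
  have hhl : h ∈ lifts φ := (lifts_iff_coeff_lifts h).mpr hlift
  obtain ⟨h', hh'⟩ := (mem_lifts h).mp hhl
  -- Step 2: all coefficients of g are in the range of φ
  have gstep : ∀ k : ℕ, ∀ t : ℕ, m - t ≤ k → g.coeff t ∈ Set.range φ := by
    intro k
    induction k with
    | zero =>
      intro t ht
      rcases eq_or_lt_of_le (by omega : m ≤ t) with ht' | ht'
      · exact ⟨1, by rw [map_one, ← ht', hg.coeff_natDegree]⟩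
      · exact ⟨0, by rw [map_zero, coeff_eq_zero_of_natDegree_lt ht']⟩
    | succ k ih =>
      intro t ht
      by_cases htk : m - t ≤ k
      · exact ih t htk
      have htm : t < m := by omega
      have ih' : ∀ i : ℕ, t < i → g.coeff i ∈ Set.range φ := fun i hi => ih i (by omega)
      have hgsum : g.comp h = ∑ i ∈ Finset.range (m + 1), C (g.coeff i) * h ^ i := by
        rw [comp_eq_sum_left]
        exact sum_over_range' g (fun i => by simp) (m + 1) (by omega)
      have hcoefftn : φ (f.coeff (t * n)) =
          ∑ i ∈ Finset.range (m + 1), g.coeff i * (h ^ i).coeff (t * n) := by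
        have h1 : (f.map φ).coeff (t * n) = (g.comp h).coeff (t * n) := by rw [hcomp]
        rw [coeff_map] at h1
        rw [h1, hgsum, finset_sum_coeff]
        exact Finset.sum_congr rfl fun i _ => by rw [coeff_C_mul]
      have htmem : t ∈ Finset.range (m + 1) := Finset.mem_range.mpr (by omega)
      have hteq : (h ^ t).coeff (t * n) = 1 := by
        have := (hh.pow t).coeff_natDegree
        rwa [hh.natDegree_pow, ← hn] at this
      have hsplit : φ (f.coeff (t * n)) =
          g.coeff t + ∑ i ∈ (Finset.range (m + 1)).erase t,
            g.coeff i * (h ^ i).coeff (t * n) := by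
        rw [hcoefftn, ← Finset.add_sum_erase _ _ htmem, hteq, mul_one]
      have hrest : ∑ i ∈ (Finset.range (m + 1)).erase t,
          g.coeff i * (h ^ i).coeff (t * n) ∈ φ.fieldRange := by
        apply Subfield.sum_mem
        intro i hi
        rcases Finset.mem_erase.mp hi with ⟨hit, _⟩
        rcases lt_trichotomy i t with hlt | heq | hgt
        · have hz : (h ^ i).coeff (t * n) = 0 := by
            apply coeff_eq_zero_of_natDegree_lt
            rw [hh.natDegree_pow]
            exact (Nat.mul_lt_mul_right hn0).mpr hlt
          exact RingHom.mem_fieldRange.mpr ⟨0, by rw [map_zero, hz, mul_zero]⟩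
        · exact absurd heq hit
        · obtain ⟨q, hq⟩ := ih' i hgt
          refine RingHom.mem_fieldRange.mpr ⟨q * (h' ^ i).coeff (t * n), ?_⟩
          rw [map_mul, hq, ← hh', ← Polynomial.map_pow, coeff_map]
      obtain ⟨q, hq⟩ := RingHom.mem_fieldRange.mp hrest
      exact ⟨f.coeff (t * n) - q, by rw [map_sub, hq, hsplit]; ring⟩
  have glift : ∀ t : ℕ, g.coeff t ∈ Set.range φ := fun t => gstep (m - t) t le_rfl
  have hgl : g ∈ lifts φ := (lifts_iff_coeff_lifts g).mpr glift
  obtain ⟨g', hg'⟩ := (mem_lifts g).mp hgl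
  exact ⟨⟨g', hg'.symm⟩, ⟨h', hh'.symm⟩⟩
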